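/- Let σ > 0 and 0 ≤ a < σ. Let Q_a = (1/2)·N(−a,σ²) + (1/2)·N(a,σ²) be the equal mixture of two real Gaussian measures with means ∓a and variance σ². Then the Kullback–Leibler divergence satisfies D( N(0,σ²) ‖ Q_a ) ≤ a⁴/(4σ⁴). -/

import Mathlib

open MeasureTheory ProbabilityTheory Real
open scoped ENNReal NNReal

/-! ### Auxiliary analytic lemmas -/

lemma mono_aux {f f' : ℝ → ℝ} (hf : ∀ x, HasDerivAt f (f' x) x)
    (h0 : ∀ x, 0 ≤ x → 0 ≤ f' x) {t : ℝ} (ht : 0 ≤ t) : f 0 ≤ f t := by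
  have : MonotoneOn f (Set.Ici 0) := by
    refine monotoneOn_of_deriv_nonneg (convex_Ici 0)
      (fun x _ => (hf x).continuousAt.continuousWithinAt)
      (fun x hx => ((hf x).differentiableAt).differentiableWithinAt) ?_
    intro x hx
    rw [interior_Ici] at hx
    rw [(hf x).deriv]
    exact h0 x (le_of_lt hx)
  exact this Set.self_mem_Ici ht ht

lemma hasDerivAt_tanh' (x : ℝ) : HasDerivAt Real.tanh (1 - Real.tanh x ^ 2) x := by
  have h := (Real.hasDerivAt_sinh x).div (Real.hasDerivAt_cosh x) (Real.cosh_pos x).ne'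
  have heq : (Real.cosh x * Real.cosh x - Real.sinh x * Real.sinh x) / Real.cosh x ^ 2
      = 1 - Real.tanh x ^ 2 := by
    rw [Real.tanh_eq_sinh_div_cosh]
    have h1 : Real.cosh x ≠ 0 := (Real.cosh_pos x).ne'
    field_simp
  rw [heq] at h
  exact h.congr_of_eventuallyEq
    (Filter.Eventually.of_forall fun y => Real.tanh_eq_sinh_div_cosh y)

lemma my_tanh_nonneg {t : ℝ} (ht : 0 ≤ t) : 0 ≤ Real.tanh t := by
  rw [Real.tanh_eq_sinh_div_cosh]
  exact div_nonneg (Real.sinh_nonneg_iff.mpr ht) (Real.cosh_pos t).le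

lemma my_tanh_le_self {t : ℝ} (ht : 0 ≤ t) : Real.tanh t ≤ t := by
  have h := mono_aux (f := fun x => x - Real.tanh x)
    (f' := fun x => 1 - (1 - Real.tanh x ^ 2))
    (fun x => (hasDerivAt_id x).sub (hasDerivAt_tanh' x))
    (fun x hx => by nlinarith [sq_nonneg (Real.tanh x)]) ht
  simp only [Real.tanh_zero, sub_zero] at h
  linarith

lemma tanh_ge {t : ℝ} (ht : 0 ≤ t) : t - t ^ 3 / 3 ≤ Real.tanh t := by
  have h := mono_aux (f := fun x => Real.tanh x - x + x ^ 3 / 3)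
    (f' := fun x => (1 - Real.tanh x ^ 2) - 1 + 3 * x ^ 2 / 3)
    (fun x => (((hasDerivAt_tanh' x).sub (hasDerivAt_id x)).add
      (((hasDerivAt_pow 3 x)).div_const 3)) )
    (fun x hx => by nlinarith [my_tanh_nonneg hx, my_tanh_le_self hx]) ht
  simp only [Real.tanh_zero] at h
  norm_num at h
  linarith

lemma hasDerivAt_log_cosh (x : ℝ) :
    HasDerivAt (fun y => Real.log (Real.cosh y)) (Real.tanh x) x := by
  have := (Real.hasDerivAt_cosh x).log (Real.cosh_pos x).ne'
  rw [← Real.tanh_eq_sinh_div_cosh] at this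
  exact this

lemma log_cosh_ge (t : ℝ) : t ^ 2 / 2 - t ^ 4 / 12 ≤ Real.log (Real.cosh t) := by
  have key : ∀ s : ℝ, 0 ≤ s → s ^ 2 / 2 - s ^ 4 / 12 ≤ Real.log (Real.cosh s) := by
    intro s hs
    have h := mono_aux (f := fun x => Real.log (Real.cosh x) - (x ^ 2 / 2 - x ^ 4 / 12))
      (f' := fun x => Real.tanh x - (2 * x / 2 - 4 * x ^ 3 / 12))
      (fun x => (hasDerivAt_log_cosh x).sub (((hasDerivAt_pow 2 x).div_const 2).sub
          ((hasDerivAt_pow 4 x).div_const 12) |>.congr_deriv (by norm_num)))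
      (fun x hx => by
        have := tanh_ge hx
        nlinarith) hs
    simp only [Real.cosh_zero, Real.log_one] at h
    norm_num at h
    linarith
  rcases le_or_gt 0 t with h | h
  · exact key t h
  · have := key (-t) (by linarith)
    rw [Real.cosh_neg, show (-t)^2 = t^2 from by ring, show (-t)^4 = t^4 from by ring] at this
    exact this

lemma log_cosh_le (t : ℝ) : Real.log (Real.cosh t) ≤ t ^ 2 / 2 := by
  have key : ∀ s : ℝ, 0 ≤ s → Real.log (Real.cosh s) ≤ s ^ 2 / 2 := by
    intro s hs
    have h := mono_aux (f := fun x => x ^ 2 / 2 - Real.log (Real.cosh x))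
      (f' := fun x => 2 * x / 2 - Real.tanh x)
      (fun x => ((hasDerivAt_pow 2 x).div_const 2).congr_deriv (by norm_num) |>.sub
        (hasDerivAt_log_cosh x))
      (fun x hx => by
        have := my_tanh_le_self hx
        nlinarith) hs
    simp only [Real.cosh_zero, Real.log_one] at h
    norm_num at h
    linarith
  rcases le_or_gt 0 t with h | h
  · exact key t h
  · have := key (-t) (by linarith)
    rw [Real.cosh_neg, show (-t)^2 = t^2 from by ring] at this
    exact this

lemma log_cosh_nonneg (t : ℝ) : 0 ≤ Real.log (Real.cosh t) :=
  Real.log_nonneg (Real.one_le_cosh t)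

/-! ### Gaussian integral computations -/

open Set in
lemma integral_sq_exp {b : ℝ} (hb : 0 < b) :
    ∫ x : ℝ, x ^ 2 * exp (-b * x ^ 2) = b ^ (-(3:ℝ)/2) * (Real.sqrt π / 2) := by
  have h1 : ∫ x : ℝ, x ^ 2 * exp (-b * x ^ 2)
      = 2 * ∫ x in Ioi (0:ℝ), x ^ 2 * exp (-b * x ^ 2) := by
    rw [← integral_comp_abs (f := fun x => x ^ 2 * exp (-b * x ^ 2))]
    congr 1; ext x
    rw [show |x| ^ 2 = x ^ 2 from sq_abs x]
  rw [h1]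
  have h2 : ∫ x in Ioi (0:ℝ), x ^ 2 * exp (-b * x ^ 2)
      = b ^ (-((2:ℝ) + 1) / 2) * (1 / 2) * Real.Gamma (((2:ℝ) + 1) / 2) := by
    rw [← integral_rpow_mul_exp_neg_mul_rpow two_pos (by norm_num : (-1:ℝ) < 2) hb]
    refine setIntegral_congr_fun measurableSet_Ioi (fun x hx => ?_)
    rw [show ((2:ℝ)) = ((2:ℕ):ℝ) from by norm_num, Real.rpow_natCast]
  rw [h2]
  have hG : Real.Gamma (((2:ℝ) + 1) / 2) = Real.sqrt π / 2 := by
    have : ((2:ℝ) + 1) / 2 = 1/2 + 1 := by norm_num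
    rw [this, Real.Gamma_add_one (by norm_num), Real.Gamma_one_half_eq]
    ring
  rw [hG]
  ring_nf

open Set in
lemma integral_pow4_exp {b : ℝ} (hb : 0 < b) :
    ∫ x : ℝ, x ^ 4 * exp (-b * x ^ 2) = b ^ (-(5:ℝ)/2) * (3 * Real.sqrt π / 4) := by
  have h1 : ∫ x : ℝ, x ^ 4 * exp (-b * x ^ 2)
      = 2 * ∫ x in Ioi (0:ℝ), x ^ 4 * exp (-b * x ^ 2) := by
    rw [← integral_comp_abs (f := fun x => x ^ 4 * exp (-b * x ^ 2))]
    congr 1; ext x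
    rw [show |x| ^ 2 = x ^ 2 from sq_abs x, show |x| ^ 4 = x ^ 4 from by
      rw [← abs_pow]; exact abs_of_nonneg (by positivity)]
  rw [h1]
  have h2 : ∫ x in Ioi (0:ℝ), x ^ 4 * exp (-b * x ^ 2)
      = b ^ (-((4:ℝ) + 1) / 2) * (1 / 2) * Real.Gamma (((4:ℝ) + 1) / 2) := by
    rw [← integral_rpow_mul_exp_neg_mul_rpow two_pos (by norm_num : (-1:ℝ) < 4) hb]
    refine setIntegral_congr_fun measurableSet_Ioi (fun x hx => ?_)
    rw [show ((4:ℝ)) = ((4:ℕ):ℝ) from by norm_num, Real.rpow_natCast,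
      show ((2:ℝ)) = ((2:ℕ):ℝ) from by norm_num, Real.rpow_natCast]
  rw [h2]
  have hG : Real.Gamma (((4:ℝ) + 1) / 2) = 3 * Real.sqrt π / 4 := by
    have h52 : ((4:ℝ) + 1) / 2 = 3/2 + 1 := by norm_num
    have h32 : (3:ℝ)/2 = 1/2 + 1 := by norm_num
    rw [h52, Real.Gamma_add_one (by norm_num), h32, Real.Gamma_add_one (by norm_num),
      Real.Gamma_one_half_eq]
    ring
  rw [hG]
  ring_nf

/-! ### Gaussian moments -/

variable {v : ℝ≥0}

lemma pdf_eq (v : ℝ≥0) (x : ℝ) :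
    gaussianPDFReal 0 v x = (Real.sqrt (2 * π * v))⁻¹ * rexp (-(2 * (v:ℝ))⁻¹ * x ^ 2) := by
  simp only [gaussianPDFReal, sub_zero]
  rw [neg_div, div_eq_inv_mul, neg_mul]

lemma sqrt_2piv (v : ℝ≥0) : Real.sqrt (2 * π * (v:ℝ)) = Real.sqrt π * Real.sqrt (2 * v) := by
  rw [show 2 * π * (v:ℝ) = π * (2 * v) from by ring, Real.sqrt_mul pi_pos.le]

lemma rpow_three_half {c : ℝ} (hc : 0 < c) : c ^ ((3:ℝ)/2) = c * Real.sqrt c := by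
  rw [show (3:ℝ)/2 = 1 + 1/2 from by norm_num, Real.rpow_add hc, Real.rpow_one,
    Real.sqrt_eq_rpow, one_div]

lemma rpow_five_half {c : ℝ} (hc : 0 < c) : c ^ ((5:ℝ)/2) = c ^ 2 * Real.sqrt c := by
  rw [show (5:ℝ)/2 = 2 + 1/2 from by norm_num, Real.rpow_add hc,
    Real.sqrt_eq_rpow, one_div, show ((2:ℝ)) = ((2:ℕ):ℝ) from by norm_num,
    Real.rpow_natCast]

lemma inv_rpow_neg32 {c : ℝ} (hc : 0 < c) : (c⁻¹) ^ (-(3:ℝ)/2) = c * Real.sqrt c := by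
  rw [show (-(3:ℝ)/2) = -((3:ℝ)/2) from by ring, Real.inv_rpow hc.le,
    Real.rpow_neg hc.le, inv_inv, rpow_three_half hc]

lemma inv_rpow_neg52 {c : ℝ} (hc : 0 < c) : (c⁻¹) ^ (-(5:ℝ)/2) = c ^ 2 * Real.sqrt c := by
  rw [show (-(5:ℝ)/2) = -((5:ℝ)/2) from by ring, Real.inv_rpow hc.le,
    Real.rpow_neg hc.le, inv_inv, rpow_five_half hc]

lemma gauss_moment2 (hv : v ≠ 0) : ∫ x : ℝ, gaussianPDFReal 0 v x * x ^ 2 = v := by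
  have hvpos : (0:ℝ) < v := NNReal.coe_pos.mpr (pos_iff_ne_zero.mpr hv)
  have hc : (0:ℝ) < 2 * v := by linarith
  have hb : (0:ℝ) < (2 * (v:ℝ))⁻¹ := by positivity
  calc ∫ x : ℝ, gaussianPDFReal 0 v x * x ^ 2
      = ∫ x : ℝ, (Real.sqrt (2 * π * v))⁻¹ * (x ^ 2 * exp (-(2*(v:ℝ))⁻¹ * x ^ 2)) := by
        congr 1; ext x; rw [pdf_eq]; ring
    _ = (Real.sqrt (2 * π * v))⁻¹ * (((2*(v:ℝ))⁻¹) ^ (-(3:ℝ)/2) * (Real.sqrt π / 2)) := by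
        rw [integral_const_mul, integral_sq_exp hb]
    _ = v := by
        rw [inv_rpow_neg32 hc, sqrt_2piv]
        have h1 : Real.sqrt π ≠ 0 := by positivity
        have h2 : Real.sqrt (2*(v:ℝ)) ≠ 0 := by positivity
        field_simp

lemma gauss_moment4 (hv : v ≠ 0) : ∫ x : ℝ, gaussianPDFReal 0 v x * x ^ 4 = 3 * (v:ℝ) ^ 2 := by
  have hvpos : (0:ℝ) < v := NNReal.coe_pos.mpr (pos_iff_ne_zero.mpr hv)
  have hc : (0:ℝ) < 2 * v := by linarith
  have hb : (0:ℝ) < (2 * (v:ℝ))⁻¹ := by positivity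
  calc ∫ x : ℝ, gaussianPDFReal 0 v x * x ^ 4
      = ∫ x : ℝ, (Real.sqrt (2 * π * v))⁻¹ * (x ^ 4 * exp (-(2*(v:ℝ))⁻¹ * x ^ 2)) := by
        congr 1; ext x; rw [pdf_eq]; ring
    _ = (Real.sqrt (2 * π * v))⁻¹ * (((2*(v:ℝ))⁻¹) ^ (-(5:ℝ)/2) * (3 * Real.sqrt π / 4)) := by
        rw [integral_const_mul, integral_pow4_exp hb]
    _ = 3 * (v:ℝ) ^ 2 := by
        rw [inv_rpow_neg52 hc, sqrt_2piv]
        have h1 : Real.sqrt π ≠ 0 := by positivity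
        have h2 : Real.sqrt (2*(v:ℝ)) ≠ 0 := by positivity
        field_simp
        ring

lemma integrable_pdf_mul_sq (hv : v ≠ 0) :
    Integrable (fun x : ℝ => gaussianPDFReal 0 v x * x ^ 2) := by
  have hvpos : (0:ℝ) < v := NNReal.coe_pos.mpr (pos_iff_ne_zero.mpr hv)
  have hb : (0:ℝ) < (2 * (v:ℝ))⁻¹ := by positivity
  have h := ((integrable_rpow_mul_exp_neg_mul_sq hb (by norm_num : (-1:ℝ) < 2)).const_mul
    ((Real.sqrt (2 * π * v))⁻¹))
  refine h.congr (Filter.Eventually.of_forall fun x => ?_)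
  dsimp only
  rw [pdf_eq, show x ^ ((2:ℝ)) = x ^ (2:ℕ) from by
    rw [show ((2:ℝ)) = ((2:ℕ):ℝ) from by norm_num, Real.rpow_natCast]]
  ring

lemma integrable_pdf_mul_pow4 (hv : v ≠ 0) :
    Integrable (fun x : ℝ => gaussianPDFReal 0 v x * x ^ 4) := by
  have hvpos : (0:ℝ) < v := NNReal.coe_pos.mpr (pos_iff_ne_zero.mpr hv)
  have hb : (0:ℝ) < (2 * (v:ℝ))⁻¹ := by positivity
  have h := ((integrable_rpow_mul_exp_neg_mul_sq hb (by norm_num : (-1:ℝ) < 4)).const_mul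
    ((Real.sqrt (2 * π * v))⁻¹))
  refine h.congr (Filter.Eventually.of_forall fun x => ?_)
  dsimp only
  rw [pdf_eq, show x ^ ((4:ℝ)) = x ^ (4:ℕ) from by
    rw [show ((4:ℝ)) = ((4:ℕ):ℝ) from by norm_num, Real.rpow_natCast]]
  ring

lemma continuous_pdf (v : ℝ≥0) : Continuous (gaussianPDFReal 0 v) := by
  rw [gaussianPDFReal_def]
  fun_prop

lemma integrable_pdf_mul_logcosh (hv : v ≠ 0) (c : ℝ) :
    Integrable (fun x : ℝ => gaussianPDFReal 0 v x * Real.log (Real.cosh (c * x))) := by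
  have hcont : Continuous (fun x : ℝ => gaussianPDFReal 0 v x
      * Real.log (Real.cosh (c * x))) := by
    refine (continuous_pdf v).mul ?_
    exact (Real.continuous_cosh.comp (continuous_const.mul continuous_id)).log
      (fun x => (Real.cosh_pos _).ne')
  refine Integrable.mono' ((integrable_pdf_mul_sq hv).const_mul (c^2/2))
    hcont.aestronglyMeasurable (Filter.Eventually.of_forall fun x => ?_)
  have h0 : 0 ≤ gaussianPDFReal 0 v x := gaussianPDFReal_nonneg 0 v x
  rw [Real.norm_eq_abs, abs_of_nonneg (mul_nonneg h0 (log_cosh_nonneg _))]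
  calc gaussianPDFReal 0 v x * Real.log (Real.cosh (c * x))
      ≤ gaussianPDFReal 0 v x * ((c*x) ^ 2 / 2) :=
        mul_le_mul_of_nonneg_left (log_cosh_le _) h0
    _ = c ^ 2 / 2 * (gaussianPDFReal 0 v x * x ^ 2) := by ring

lemma integral_gaussianReal_eq (hv : v ≠ 0) (g : ℝ → ℝ) :
    ∫ x, g x ∂(gaussianReal 0 v) = ∫ x, gaussianPDFReal 0 v x * g x := by
  rw [gaussianReal_of_var_ne_zero _ hv]
  have h : (gaussianPDF 0 v) = fun x => ((gaussianPDFReal 0 v x).toNNReal : ℝ≥0∞) := rfl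
  rw [h, integral_withDensity_eq_integral_smul
    ((measurable_gaussianPDFReal 0 v).real_toNNReal) g]
  congr 1; ext x
  rw [NNReal.smul_def, smul_eq_mul, Real.coe_toNNReal _ (gaussianPDFReal_nonneg 0 v x)]

/-! ### Mixture density identity -/

lemma mix_pdf_eq (hv : v ≠ 0) (a x : ℝ) :
    1/2 * gaussianPDFReal (-a) v x + 1/2 * gaussianPDFReal a v x
      = gaussianPDFReal 0 v x
        * (rexp (-(a^2/(2*(v:ℝ)))) * Real.cosh (a*x/(v:ℝ))) := by
  have hvpos : (0:ℝ) < v := NNReal.coe_pos.mpr (pos_iff_ne_zero.mpr hv)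
  simp only [gaussianPDFReal, sub_zero, Real.cosh_eq]
  rw [show -(x - -a)^2/(2*(v:ℝ)) = -x^2/(2*(v:ℝ)) + (-(a^2/(2*(v:ℝ))) + -(a*x/(v:ℝ)))
      from by field_simp; ring,
    show -(x - a)^2/(2*(v:ℝ)) = -x^2/(2*(v:ℝ)) + (-(a^2/(2*(v:ℝ))) + a*x/(v:ℝ))
      from by field_simp; ring,
    Real.exp_add, Real.exp_add, Real.exp_add, Real.exp_add]
  ring

/-- The Kullback–Leibler divergence `D(P‖Q) = ∫ log(dP/dQ) dP`
(for `P ≪ Q` this equals `∫ p(x) ln(p(x)/q(x)) dx` where `p, q` are densities). -/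
noncomputable def klDiv {α : Type*} [MeasurableSpace α] (P Q : Measure α) : ℝ :=
  ∫ x, Real.log ((P.rnDeriv Q) x).toReal ∂P

/-- For `σ > 0` and `0 ≤ a < σ`, letting `Q_a` be the equal mixture
`(1/2)·N(−a,σ²) + (1/2)·N(a,σ²)`, the Kullback–Leibler divergence satisfies
`D(N(0,σ²) ‖ Q_a) ≤ a⁴/(4σ⁴)`. -/
theorem stmt_6 (σ a : ℝ) (hσ : 0 < σ) (ha0 : 0 ≤ a) (ha : a < σ) :
    klDiv (gaussianReal 0 (σ ^ 2).toNNReal)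
        ((1 / 2 : ℝ≥0∞) • gaussianReal (-a) (σ ^ 2).toNNReal +
          (1 / 2 : ℝ≥0∞) • gaussianReal a (σ ^ 2).toNNReal)
      ≤ a ^ 4 / (4 * σ ^ 4) := by
  set v : ℝ≥0 := (σ ^ 2).toNNReal with hv_def
  have hvR : (v:ℝ) = σ ^ 2 := Real.coe_toNNReal _ (by positivity)
  have hvpos : (0:ℝ) < v := by rw [hvR]; positivity
  have hv : v ≠ 0 := by
    intro h
    rw [h] at hvR
    simp at hvR
    nlinarith
  set P : Measure ℝ := gaussianReal 0 v with hP_def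
  set qfun : ℝ → ℝ≥0∞ := fun x =>
    (1/2 : ℝ≥0∞) * gaussianPDF (-a) v x + (1/2 : ℝ≥0∞) * gaussianPDF a v x with hq_def
  have hq_meas : Measurable qfun :=
    ((measurable_gaussianPDF (-a) v).const_mul _).add
      ((measurable_gaussianPDF a v).const_mul _)
  have hQ : ((1 / 2 : ℝ≥0∞) • gaussianReal (-a) v + (1 / 2 : ℝ≥0∞) • gaussianReal a v)
      = volume.withDensity qfun := by
    rw [gaussianReal_of_var_ne_zero _ hv, gaussianReal_of_var_ne_zero _ hv,
      ← withDensity_smul _ (measurable_gaussianPDF (-a) v),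
      ← withDensity_smul _ (measurable_gaussianPDF a v),
      ← withDensity_add_left (((measurable_gaussianPDF (-a) v).const_smul _))]
    rfl
  have hq0 : ∀ x, qfun x ≠ 0 := fun x => by
    have := gaussianPDF_pos (-a) hv x
    simp only [hq_def, ne_eq, add_eq_zero, mul_eq_zero]
    intro ⟨h1, _⟩
    rcases h1 with h | h
    · norm_num at h
    · exact absurd h this.ne'
  have hqtop : ∀ x, qfun x ≠ ∞ := fun x => by
    simp only [hq_def]
    refine ENNReal.add_ne_top.mpr ⟨?_, ?_⟩ <;>
      exact ENNReal.mul_ne_top (by norm_num) ENNReal.ofReal_ne_top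
  -- rnDeriv identity
  have hrn : P.rnDeriv (volume.withDensity qfun)
      =ᵐ[volume] fun x => (qfun x)⁻¹ * gaussianPDF 0 v x := by
    have h1 := Measure.rnDeriv_withDensity_right P volume hq_meas.aemeasurable
      (Filter.Eventually.of_forall hq0) (Filter.Eventually.of_forall hqtop)
    have h2 := rnDeriv_gaussianReal 0 v
    filter_upwards [h1, h2] with x hx1 hx2
    rw [hx1, hx2]
  have hac : P ≪ volume := gaussianReal_absolutelyContinuous 0 hv
  -- pointwise log formula
  have hlog : (fun x => Real.log ((P.rnDeriv (volume.withDensity qfun) x)).toReal)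
      =ᵐ[P] fun x => a^2/(2*(v:ℝ)) - Real.log (Real.cosh (a*x/(v:ℝ))) := by
    refine hac.ae_eq ?_
    filter_upwards [hrn] with x hx
    rw [hx]
    have hpdfpos : 0 < gaussianPDFReal 0 v x := gaussianPDFReal_pos 0 v x hv
    have htr : ((qfun x)⁻¹ * gaussianPDF 0 v x).toReal
        = gaussianPDFReal 0 v x / (qfun x).toReal := by
      rw [ENNReal.toReal_mul, ENNReal.toReal_inv, div_eq_inv_mul]
      congr 1
      exact ENNReal.toReal_ofReal hpdfpos.le
    have hqtr : (qfun x).toReal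
        = 1/2 * gaussianPDFReal (-a) v x + 1/2 * gaussianPDFReal a v x := by
      simp only [hq_def, gaussianPDF_def]
      rw [ENNReal.toReal_add (ENNReal.mul_ne_top (by norm_num) ENNReal.ofReal_ne_top)
        (ENNReal.mul_ne_top (by norm_num) ENNReal.ofReal_ne_top),
        ENNReal.toReal_mul, ENNReal.toReal_mul,
        ENNReal.toReal_ofReal (gaussianPDFReal_nonneg _ _ _),
        ENNReal.toReal_ofReal (gaussianPDFReal_nonneg _ _ _)]
      norm_num
    rw [htr, hqtr, mix_pdf_eq hv a x]
    have hcoshpos : 0 < Real.cosh (a*x/(v:ℝ)) := Real.cosh_pos _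
    rw [div_mul_eq_div_div, div_self hpdfpos.ne',
      Real.log_div one_ne_zero (by positivity), Real.log_one,
      Real.log_mul (Real.exp_ne_zero _) hcoshpos.ne', Real.log_exp]
    ring
  -- rewrite klDiv
  rw [klDiv, hQ, integral_congr_ae hlog, hP_def,
    integral_gaussianReal_eq hv]
  -- compare with polynomial bound
  have hle : ∫ x : ℝ, gaussianPDFReal 0 v x * (a^2/(2*(v:ℝ))
        - Real.log (Real.cosh (a*x/(v:ℝ))))
      ≤ ∫ x : ℝ, (a^2/(2*(v:ℝ))) * gaussianPDFReal 0 v x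
        - (a^2/(2*(v:ℝ)^2)) * (gaussianPDFReal 0 v x * x^2)
        + (a^4/(12*(v:ℝ)^4)) * (gaussianPDFReal 0 v x * x^4) := by
    have hint1 : Integrable (fun x : ℝ => gaussianPDFReal 0 v x * (a^2/(2*(v:ℝ))
        - Real.log (Real.cosh (a*x/(v:ℝ))))) := by
      have := ((integrable_gaussianPDFReal 0 v).const_mul (a^2/(2*(v:ℝ)))).sub
        (integrable_pdf_mul_logcosh hv (a/(v:ℝ)))
      refine this.congr (Filter.Eventually.of_forall fun x => ?_)
      simp only [Pi.sub_apply]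
      rw [show a/(v:ℝ) * x = a*x/(v:ℝ) from by ring]
      ring
    have hint2 : Integrable (fun x : ℝ => (a^2/(2*(v:ℝ))) * gaussianPDFReal 0 v x
        - (a^2/(2*(v:ℝ)^2)) * (gaussianPDFReal 0 v x * x^2)
        + (a^4/(12*(v:ℝ)^4)) * (gaussianPDFReal 0 v x * x^4)) := by
      exact (((integrable_gaussianPDFReal 0 v).const_mul _).sub
        ((integrable_pdf_mul_sq hv).const_mul _)).add
        ((integrable_pdf_mul_pow4 hv).const_mul _)
    refine integral_mono hint1 hint2 fun x => ?_
    have h0 : 0 ≤ gaussianPDFReal 0 v x := gaussianPDFReal_nonneg 0 v x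
    have hlc := log_cosh_ge (a*x/(v:ℝ))
    dsimp only
    have : gaussianPDFReal 0 v x * (a^2/(2*(v:ℝ)) - Real.log (Real.cosh (a*x/(v:ℝ))))
        ≤ gaussianPDFReal 0 v x * (a^2/(2*(v:ℝ))
          - ((a*x/(v:ℝ))^2/2 - (a*x/(v:ℝ))^4/12)) :=
      mul_le_mul_of_nonneg_left (by linarith) h0
    refine this.trans (le_of_eq ?_)
    field_simp
    ring
  refine hle.trans (le_of_eq ?_)
  have hI1a : Integrable (fun x : ℝ => a^2/(2*(v:ℝ)) * gaussianPDFReal 0 v x) :=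
    (integrable_gaussianPDFReal 0 v).const_mul _
  have hI1b : Integrable (fun x : ℝ => a^2/(2*(v:ℝ)^2) * (gaussianPDFReal 0 v x * x^2)) :=
    (integrable_pdf_mul_sq hv).const_mul _
  have hI1 : Integrable (fun x : ℝ => a^2/(2*(v:ℝ)) * gaussianPDFReal 0 v x
      - a^2/(2*(v:ℝ)^2) * (gaussianPDFReal 0 v x * x^2)) := hI1a.sub hI1b
  have hI2 : Integrable (fun x : ℝ => a^4/(12*(v:ℝ)^4) * (gaussianPDFReal 0 v x * x^4)) :=
    (integrable_pdf_mul_pow4 hv).const_mul _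
  rw [integral_add hI1 hI2, integral_sub hI1a hI1b,
    integral_const_mul, integral_const_mul, integral_const_mul,
    integral_gaussianPDFReal_eq_one 0 hv, gauss_moment2 hv, gauss_moment4 hv]
  rw [hvR]
  have hσ4 : σ ^ 4 ≠ 0 := by positivity
  field_simp
  ring
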